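/- Let (G,X) be a G-system, x ∈ X, and F = (F_n)_{n∈D} a Følner net in G. Suppose C_F(x) is S-generic (there exists z ∈ C_F(x) with C_F(z) = C_F(x)), C_F(x) is not a minimal subset of (G,X), and the almost periodic points of (G,X) are dense in C_F(x). Then there exist two distinct points x₁, x₂ ∈ C_F(x) such that for every x̂ ∈ C_F(x), every open neighborhood U of x̂, every open neighborhood U₁ of x₁, and every open neighborhood U₂ of x₂, there exist y₁, y₂ ∈ U and g ∈ G with g y₁ ∈ U₁ and g y₂ ∈ U₂. -/

import Mathlib

set_option linter.unusedSectionVars false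


open Filter Metric Set

section Defs

variable {G : Type*} [Group G] [DecidableEq G]
variable {D : Type*} [Preorder D]

/-- `F` is a (left) Følner net in `G`. -/
def IsFolnerNet (F : D → Finset G) : Prop :=
  (∀ n, (F n).Nonempty) ∧
    ∀ g : G,
      Tendsto (fun n : D =>
          ((symmDiff ((F n).image fun h => g * h) (F n)).card : ℝ) / (F n).card)
        atTop (nhds 0)

/-- Upper density of `A ⊆ G` relative to the net `F`. -/
noncomputable def upperDensity (F : D → Finset G) (A : Set G) : ℝ :=
  sSup {α : ℝ | ∀ m : D, ∃ n : D, m ≤ n ∧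
    α ≤ (((F n : Set G) ∩ A).ncard : ℝ) / (F n).card}

variable {X : Type*} [MetricSpace X] [MulAction G X]

/-- The minimal `F`-center of attraction of `x`. -/
def minCenter (F : D → Finset G) (x : X) : Set X :=
  {y : X | ∀ U : Set X, IsOpen U → y ∈ U → 0 < upperDensity F {g : G | g • x ∈ U}}

end Defs

/-- `Λ` is a minimal subset of the `G`-system: nonempty, closed, `G`-invariant, and containing
no nonempty proper closed `G`-invariant subset. -/
def IsMinimalSubset (G : Type*) [Group G] {X : Type*} [MetricSpace X] [MulAction G X]
    (Λ : Set X) : Prop :=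
  Λ.Nonempty ∧ IsClosed Λ ∧ (∀ g : G, ∀ z ∈ Λ, g • z ∈ Λ) ∧
    ∀ Λ' ⊆ Λ, Λ'.Nonempty → IsClosed Λ' → (∀ g : G, ∀ z ∈ Λ', g • z ∈ Λ') → Λ' = Λ

/-- `S ⊆ G` is syndetic: there is a finite `F ⊆ G` with `⋃_{f ∈ F} f⁻¹ S = G`. -/
def IsSyndeticSet {G : Type*} [Group G] (S : Set G) : Prop :=
  ∃ F : Finset G, ∀ g : G, ∃ f ∈ F, f * g ∈ S

/-- `z` is an almost periodic point: `N(z, U)` is syndetic for every open neighborhood `U`. -/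
def IsAlmostPeriodicPt (G : Type*) [Group G] {X : Type*} [MetricSpace X] [MulAction G X]
    (z : X) : Prop :=
  ∀ U : Set X, IsOpen U → z ∈ U → IsSyndeticSet {g : G | g • z ∈ U}

section DensityAux

variable {G : Type*} [Group G] [DecidableEq G]
variable {D : Type*} [Preorder D] [IsDirected D (· ≤ ·)] [Nonempty D]

/-- The defining set of the upper density. -/
def densSet (F : D → Finset G) (A : Set G) : Set ℝ :=
  {α : ℝ | ∀ m : D, ∃ n : D, m ≤ n ∧
    α ≤ (((F n : Set G) ∩ A).ncard : ℝ) / (F n).card}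

lemma upperDensity_eq_sSup (F : D → Finset G) (A : Set G) :
    upperDensity F A = sSup (densSet F A) := rfl

lemma zero_mem_densSet (F : D → Finset G) (A : Set G) : (0 : ℝ) ∈ densSet F A :=
  fun m => ⟨m, le_refl m, by positivity⟩

lemma densSet_bddAbove (F : D → Finset G) (hne : ∀ n, (F n).Nonempty) (A : Set G) :
    BddAbove (densSet F A) := by
  refine ⟨1, fun α hα => ?_⟩
  obtain ⟨n, -, hn⟩ := hα (Classical.arbitrary D)
  refine hn.trans ?_
  rw [div_le_one (by exact_mod_cast (hne n).card_pos)]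
  exact_mod_cast (Set.ncard_le_ncard Set.inter_subset_left
    (F n).finite_toSet).trans_eq (Set.ncard_coe_finset _)

lemma nonempty_of_upperDensity_pos {F : D → Finset G} {A : Set G}
    (h : 0 < upperDensity F A) : A.Nonempty := by
  rcases A.eq_empty_or_nonempty with rfl | h'
  · exfalso
    refine absurd h (not_lt.2 ?_)
    refine Real.sSup_le (fun α hα => ?_) le_rfl
    obtain ⟨n, -, hn⟩ := hα (Classical.arbitrary D)
    simpa using hn
  · exact h'

lemma exists_pos_mem_densSet {F : D → Finset G} {A : Set G}
    (h : 0 < upperDensity F A) : ∃ α ∈ densSet F A, 0 < α := by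
  by_contra hcon
  push_neg at hcon
  have : upperDensity F A ≤ 0 := Real.sSup_le (fun α hα => hcon α hα) le_rfl
  linarith

/-- The key counting estimate. -/
lemma ncard_inter_le_translate (F : Finset G) (g : G) {A B : Set G}
    (hAB : ∀ a ∈ A, g * a ∈ B) :
    ((F : Set G) ∩ A).ncard ≤ ((F : Set G) ∩ B).ncard
      + (symmDiff (F.image fun h => g⁻¹ * h) F).card := by
  classical
  set F' : Finset G := F.image fun h => g⁻¹ * h with hF'
  set T : Set G := (F' : Set G) ∩ A with hT
  have h2 : T.ncard ≤ ((F : Set G) ∩ B).ncard := by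
    have himg : (fun a => g * a) '' T ⊆ (F : Set G) ∩ B := by
      rintro _ ⟨a, ⟨haF', haA⟩, rfl⟩
      obtain ⟨f, hf, rfl⟩ := Finset.mem_image.mp haF'
      refine ⟨by simpa using hf, hAB _ haA⟩
    calc T.ncard = ((fun a => g * a) '' T).ncard :=
          (Set.ncard_image_of_injective _ (mul_right_injective g)).symm
      _ ≤ _ := Set.ncard_le_ncard himg (F.finite_toSet.inter_of_left B)
  have h3 : ((F : Set G) \ (F' : Set G)).ncard
      ≤ (symmDiff F' F).card := by
    rw [← Set.ncard_coe_finset (symmDiff F' F), Finset.coe_symmDiff]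
    refine Set.ncard_le_ncard (fun a ha => Or.inr ha) ?_
    rw [← Finset.coe_symmDiff]
    exact (symmDiff F' F).finite_toSet
  have h1 : ((F : Set G) ∩ A) ⊆ T ∪ ((F : Set G) \ (F' : Set G)) := by
    intro a ⟨haF, haA⟩
    by_cases h : a ∈ (F' : Set G)
    · exact Or.inl ⟨h, haA⟩
    · exact Or.inr ⟨haF, h⟩
  calc ((F : Set G) ∩ A).ncard
      ≤ (T ∪ ((F : Set G) \ (F' : Set G))).ncard := by
        refine Set.ncard_le_ncard h1 ?_
        exact ((F'.finite_toSet.inter_of_left A).union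
          (F.finite_toSet.diff))
    _ ≤ T.ncard + ((F : Set G) \ (F' : Set G)).ncard := Set.ncard_union_le _ _
    _ ≤ _ := Nat.add_le_add h2 h3

lemma upperDensity_pos_of_mul {F : D → Finset G} (hFol : IsFolnerNet F)
    {A B : Set G} (g : G) (hAB : ∀ a ∈ A, g * a ∈ B)
    (hA : 0 < upperDensity F A) : 0 < upperDensity F B := by
  obtain ⟨α, hαmem, hαpos⟩ := exists_pos_mem_densSet hA
  have hFolg := hFol.2 g⁻¹
  have hev : ∀ᶠ n in Filter.atTop,
      ((symmDiff ((F n).image fun h => g⁻¹ * h) (F n)).card : ℝ) / (F n).card < α / 2 := by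
    have := hFolg.eventually (eventually_lt_nhds (show (0:ℝ) < α / 2 by linarith))
    exact this
  rw [Filter.eventually_atTop] at hev
  obtain ⟨m₀, hm₀⟩ := hev
  have hhalf : α / 2 ∈ densSet F B := by
    intro m
    obtain ⟨m₁, hm₁, hm₁'⟩ := directed_of (· ≤ ·) m m₀
    obtain ⟨n, hn, hαn⟩ := hαmem m₁
    refine ⟨n, hm₁.trans hn, ?_⟩
    have hcardpos : (0:ℝ) < (F n).card := by exact_mod_cast (hFol.1 n).card_pos
    have hkey := ncard_inter_le_translate (F n) g hAB
    have hkeyR : (((F n : Set G) ∩ A).ncard : ℝ)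
        ≤ (((F n : Set G) ∩ B).ncard : ℝ)
          + ((symmDiff ((F n).image fun h => g⁻¹ * h) (F n)).card : ℝ) := by
      exact_mod_cast hkey
    have hsd := hm₀ n (hm₁'.trans hn)
    rw [div_lt_iff₀ hcardpos] at hsd
    rw [le_div_iff₀ hcardpos] at hαn ⊢
    linarith
  have hbdd := densSet_bddAbove F hFol.1 B
  have : α / 2 ≤ upperDensity F B := le_csSup hbdd hhalf
  linarith

end DensityAux

section CenterAux

variable {G : Type*} [Group G] [DecidableEq G]
variable {D : Type*} [Preorder D] [IsDirected D (· ≤ ·)] [Nonempty D]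
variable {X : Type*} [MetricSpace X] [MulAction G X]

lemma isClosed_minCenter (F : D → Finset G) (x : X) : IsClosed (minCenter F x) := by
  rw [← isOpen_compl_iff, isOpen_iff_forall_mem_open]
  intro y hy
  simp only [Set.mem_compl_iff, minCenter, Set.mem_setOf_eq] at hy
  push_neg at hy
  obtain ⟨U, hUopen, hyU, hUd⟩ := hy
  refine ⟨U, fun y' hy' hmem => absurd (hmem U hUopen hy') (not_lt.2 hUd), hUopen, hyU⟩

lemma smul_mem_minCenter {F : D → Finset G} (hFol : IsFolnerNet F)
    (hcont : ∀ g : G, Continuous fun y : X => g • y)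
    {x y : X} (g : G) (hy : y ∈ minCenter F x) : g • y ∈ minCenter F x := by
  intro U hUopen hgyU
  have hpre : IsOpen ((fun y' : X => g • y') ⁻¹' U) := hUopen.preimage (hcont g)
  have h1 : 0 < upperDensity F {h : G | h • x ∈ (fun y' : X => g • y') ⁻¹' U} :=
    hy _ hpre hgyU
  refine upperDensity_pos_of_mul hFol g ?_ h1
  intro a ha
  simp only [Set.mem_preimage, Set.mem_setOf_eq] at ha ⊢
  rwa [mul_smul]

end CenterAux

section APAux

variable {G : Type*} [Group G]
variable {X : Type*} [MetricSpace X] [MulAction G X]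

lemma ap_mem_closure_orbit (hcont : ∀ g : G, Continuous fun y : X => g • y)
    {w b : X} (hw : IsAlmostPeriodicPt G w)
    (hb : b ∈ closure (Set.range fun g : G => g • w)) :
    w ∈ closure (Set.range fun g : G => g • b) := by
  rw [Metric.mem_closure_iff]
  intro ε hε
  obtain ⟨K, hK⟩ := hw (Metric.ball w (ε / 2)) Metric.isOpen_ball
    (Metric.mem_ball_self (by linarith))
  set V : Set X := ⋃ f ∈ K, (fun y : X => f • y) ⁻¹' (Metric.closedBall w (ε / 2)) with hV
  have hVclosed : IsClosed V :=
    isClosed_biUnion_finset fun f _ => Metric.isClosed_closedBall.preimage (hcont f)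
  have horb : (Set.range fun g : G => g • w) ⊆ V := by
    rintro _ ⟨g, rfl⟩
    obtain ⟨f, hfK, hf⟩ := hK g
    simp only [Set.mem_setOf_eq] at hf
    refine Set.mem_biUnion hfK ?_
    simp only [Set.mem_preimage]
    rw [← mul_smul]
    exact Metric.ball_subset_closedBall hf
  have hbV : b ∈ V := (hVclosed.closure_subset_iff.mpr horb) hb
  simp only [hV, Set.mem_iUnion, Set.mem_preimage] at hbV
  obtain ⟨f, _, hfb⟩ := hbV
  refine ⟨f • b, ⟨f, rfl⟩, ?_⟩
  rw [Metric.mem_closedBall] at hfb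
  rw [dist_comm] at hfb
  linarith

end APAux

/-- Theorem 1.5: 2-sensitivity near an S-generic non-minimal center of attraction with dense
almost periodic points. -/
theorem two_sensitivity_of_Sgeneric_nonminimal
    {G : Type*} [Group G] [Infinite G] [DecidableEq G]
    {D : Type*} [Preorder D] [IsDirected D (· ≤ ·)] [Nonempty D]
    {X : Type*} [MetricSpace X] [CompactSpace X] [MulAction G X]
    (hcont : ∀ g : G, Continuous fun y : X => g • y)
    (Fol : D → Finset G) (hFol : IsFolnerNet Fol) (x : X)
    (hS : ∃ z ∈ minCenter Fol x, minCenter Fol z = minCenter Fol x)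
    (hnotmin : ¬ IsMinimalSubset G (minCenter Fol x))
    (hdense : minCenter Fol x ⊆
      closure {z : X | z ∈ minCenter Fol x ∧ IsAlmostPeriodicPt G z}) :
    ∃ x₁ ∈ minCenter Fol x, ∃ x₂ ∈ minCenter Fol x, x₁ ≠ x₂ ∧
      ∀ xhat ∈ minCenter Fol x, ∀ U : Set X, IsOpen U → xhat ∈ U →
        ∀ U₁ : Set X, IsOpen U₁ → x₁ ∈ U₁ → ∀ U₂ : Set X, IsOpen U₂ → x₂ ∈ U₂ →
          ∃ y₁ ∈ U, ∃ y₂ ∈ U, ∃ g : G, g • y₁ ∈ U₁ ∧ g • y₂ ∈ U₂ := by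
  classical
  obtain ⟨z, hzC, hzEq⟩ := hS
  set C : Set X := minCenter Fol x with hCdef
  have hCclosed : IsClosed C := isClosed_minCenter Fol x
  have hCinv : ∀ (g : G), ∀ y ∈ C, g • y ∈ C :=
    fun g y hy => smul_mem_minCenter hFol hcont g hy
  -- every point of C is in the closure of the orbit of z
  have horbz : ∀ y ∈ C, y ∈ closure (Set.range fun g : G => g • z) := by
    intro y hy
    rw [_root_.mem_closure_iff]
    intro U hUopen hyU
    have hy' : y ∈ minCenter Fol z := by rw [hzEq]; exact hy
    obtain ⟨g, hg⟩ := nonempty_of_upperDensity_pos (hy' U hUopen hyU)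
    exact ⟨g • z, hg, g, rfl⟩
  have hclorbC : closure (Set.range fun g : G => g • z) ⊆ C :=
    hCclosed.closure_subset_iff.mpr (by rintro _ ⟨g, rfl⟩; exact hCinv g z hzC)
  -- The Ellis hull
  set φ : G → X → X := fun g y => g • y with hφdef
  set E : Set (X → X) := closure (Set.range φ) with hEdef
  have hEcompact : IsCompact E := isClosed_closure.isCompact
  have hLcomp : ∀ g : G, Continuous fun q : X → X => fun y => g • q y :=
    fun g => continuous_pi fun y => (hcont g).comp (continuous_apply y)
  have hEinv : ∀ g : G, ∀ q ∈ E, (fun y => g • q y) ∈ E := by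
    intro g q hq
    have h2 := image_closure_subset_closure_image (hLcomp g)
      (⟨q, hq, rfl⟩ : (fun y => g • q y) ∈ (fun q : X → X => fun y => g • q y) '' closure (Set.range φ))
    refine closure_mono ?_ h2
    rintro _ ⟨_, ⟨h, rfl⟩, rfl⟩
    exact ⟨g * h, by funext y; simp [hφdef, mul_smul]⟩
  have hEval : ∀ q ∈ E, ∀ y : X, q y ∈ closure (Set.range fun g : G => g • y) := by
    intro q hq y
    have h2 := image_closure_subset_closure_image (continuous_apply y)
      (⟨q, hq, rfl⟩ : q y ∈ (fun f : X → X => f y) '' closure (Set.range φ))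
    refine closure_mono ?_ h2
    rintro _ ⟨_, ⟨g, rfl⟩, rfl⟩
    exact ⟨g, rfl⟩
  have hPair : ∀ w : X, ∀ q ∈ E,
      (q w, q z) ∈ closure (Set.range fun g : G => (g • w, g • z)) := by
    intro w q hq
    have hψ : Continuous fun f : X → X => (f w, f z) :=
      (continuous_apply w).prodMk (continuous_apply z)
    have h2 := image_closure_subset_closure_image hψ
      (⟨q, hq, rfl⟩ : (q w, q z) ∈ (fun f : X → X => (f w, f z)) '' closure (Set.range φ))
    refine closure_mono ?_ h2
    rintro _ ⟨_, ⟨g, rfl⟩, rfl⟩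
    exact ⟨g, rfl⟩
  -- Zorn's lemma: a minimal nonempty closed invariant subset of E
  obtain ⟨L, hLE, hLne, hLclosed, hLinv, hLmin⟩ :
      ∃ L : Set (X → X), L ⊆ E ∧ L.Nonempty ∧ IsClosed L ∧
        (∀ g : G, ∀ q ∈ L, (fun y => g • q y) ∈ L) ∧
        ∀ L' ⊆ L, L'.Nonempty → IsClosed L' →
          (∀ g : G, ∀ q ∈ L', (fun y => g • q y) ∈ L') → L' = L := by
    set S : Set (Set (X → X)) :=
      {S | S ⊆ E ∧ S.Nonempty ∧ IsClosed S ∧ ∀ g : G, ∀ q ∈ S, (fun y => g • q y) ∈ S} with hSdef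
    have hES : E ∈ S := ⟨le_refl _, ⟨φ 1, subset_closure ⟨1, rfl⟩⟩, isClosed_closure, hEinv⟩
    have hzorn := zorn_superset_nonempty S ?_ E hES
    · obtain ⟨L, -, hLmem, hLminimal⟩ := hzorn
      obtain ⟨hLE, hLne, hLclosed, hLinv⟩ := hLmem
      refine ⟨L, hLE, hLne, hLclosed, hLinv, ?_⟩
      intro L' hL'sub hL'ne hL'closed hL'inv
      have : L ⊆ L' := hLminimal ⟨hL'sub.trans hLE, hL'ne, hL'closed, hL'inv⟩ hL'sub
      exact Set.Subset.antisymm hL'sub this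
    · intro c hcS hchain hcne
      haveI : Nonempty c := hcne.to_subtype
      have hnint : (⋂₀ c).Nonempty := by
        rw [Set.sInter_eq_iInter]
        have hdir : Directed (fun (a b : Set (X → X)) => a ⊇ b) (fun i : c => (i : Set (X → X))) := by
          intro i j
          rcases hchain.total i.2 j.2 with h | h
          · exact ⟨i, Set.Subset.refl _, h⟩
          · exact ⟨j, h, Set.Subset.refl _⟩
        refine IsCompact.nonempty_iInter_of_directed_nonempty_isCompact_isClosed _
          hdir (fun i => (hcS i.2).2.1)
          (fun i => ((hcS i.2).2.2.1).isCompact) (fun i => (hcS i.2).2.2.1)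
      refine ⟨⋂₀ c, ⟨?_, hnint, isClosed_sInter fun s hs => (hcS hs).2.2.1, ?_⟩,
        fun s hs => Set.sInter_subset_of_mem hs⟩
      · obtain ⟨s, hs⟩ := hcne
        exact (Set.sInter_subset_of_mem hs).trans (hcS hs).1
      · intro g q hq
        rw [Set.mem_sInter] at hq ⊢
        exact fun s hs => (hcS hs).2.2.2 g q (hq s hs)
  have hLcompact : IsCompact L := hEcompact.of_isClosed_subset hLclosed hLE
  -- each element of L has dense "orbit" in L
  have hLorbit : ∀ q ∈ L, L ⊆ closure (Set.range fun g : G => (fun y => g • q y)) := by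
    intro q hq
    have hsub : closure (Set.range fun g : G => fun y => g • q y) ⊆ L :=
      hLclosed.closure_subset_iff.mpr (by rintro _ ⟨g, rfl⟩; exact hLinv g q hq)
    have hinv : ∀ g' : G, ∀ p ∈ closure (Set.range fun g : G => fun y => g • q y),
        (fun y => g' • p y) ∈ closure (Set.range fun g : G => fun y => g • q y) := by
      intro g' p hp
      have h2 := image_closure_subset_closure_image (hLcomp g')
        (⟨p, hp, rfl⟩ : (fun y => g' • p y) ∈
          (fun p : X → X => fun y => g' • p y) '' closure (Set.range fun g : G => fun y => g • q y))
      refine closure_mono ?_ h2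
      rintro _ ⟨_, ⟨g, rfl⟩, rfl⟩
      exact ⟨g' * g, by funext y; simp [mul_smul]⟩
    have := hLmin _ hsub ⟨_, subset_closure ⟨1, rfl⟩⟩ isClosed_closure hinv
    rw [this]
  -- the image of L at any point is a minimal subset
  have hMy : ∀ y : X, IsMinimalSubset G ((fun q : X → X => q y) '' L) := by
    intro y
    have hMycompact : IsCompact ((fun q : X → X => q y) '' L) :=
      hLcompact.image (continuous_apply y)
    refine ⟨hLne.image _, hMycompact.isClosed, ?_, ?_⟩
    · rintro g _ ⟨q, hq, rfl⟩
      exact ⟨_, hLinv g q hq, rfl⟩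
    · rintro Λ hΛsub ⟨b, hbΛ⟩ hΛclosed hΛinv
      obtain ⟨q, hqL, hqb⟩ := hΛsub hbΛ
      refine Set.Subset.antisymm hΛsub ?_
      rintro _ ⟨p, hpL, rfl⟩
      have hp' : p ∈ closure (Set.range fun g : G => fun y' => g • q y') := hLorbit q hqL hpL
      have hpy : p y ∈ closure (Set.range fun g : G => g • (q y)) := by
        have h2 := image_closure_subset_closure_image (continuous_apply y)
          (⟨p, hp', rfl⟩ : p y ∈ (fun f : X → X => f y) ''
            closure (Set.range fun g : G => fun y' => g • q y'))
        refine closure_mono ?_ h2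
        rintro _ ⟨_, ⟨g, rfl⟩, rfl⟩
        exact ⟨g, rfl⟩
      refine hΛclosed.closure_subset_iff.mpr ?_ hpy
      rintro _ ⟨g, rfl⟩
      have hqb' : q y = b := hqb
      rw [hqb']
      exact hΛinv g _ hbΛ
  set M : Set X := (fun q : X → X => q z) '' L with hMdef
  have hMC : M ⊆ C := by
    rintro _ ⟨q, hq, rfl⟩
    exact hclorbC (hEval q (hLE hq) z)
  have hzM : z ∉ M := by
    intro hzM
    have hCM : C ⊆ M := by
      intro y hy
      refine ((hMy z).2.1.closure_subset_iff.mpr ?_) (horbz y hy)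
      rintro _ ⟨g, rfl⟩
      exact (hMy z).2.2.1 g z hzM
    have hMeq : M = C := Set.Subset.antisymm hMC hCM
    exact hnotmin (hMeq ▸ hMy z)
  -- almost periodic points are fixed by some element of L
  have hAPfix : ∀ w : X, IsAlmostPeriodicPt G w → ∃ q ∈ L, q w = w := by
    intro w hw
    obtain ⟨q₀, hq₀⟩ := hLne
    have hb : q₀ w ∈ closure (Set.range fun g : G => g • w) := hEval q₀ (hLE hq₀) w
    have hw' : w ∈ closure (Set.range fun g : G => g • (q₀ w)) :=
      ap_mem_closure_orbit hcont hw hb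
    have hsub : closure (Set.range fun g : G => g • (q₀ w)) ⊆ (fun q : X → X => q w) '' L := by
      refine (hMy w).2.1.closure_subset_iff.mpr ?_
      rintro _ ⟨g, rfl⟩
      exact (hMy w).2.2.1 g _ ⟨q₀, hq₀, rfl⟩
    obtain ⟨q, hqL, hqw⟩ := hsub hw'
    exact ⟨q, hqL, hqw⟩
  -- the nested family of candidate sets
  set A : ℝ → Set X := fun δ =>
    {b | ∃ w : X, IsAlmostPeriodicPt G w ∧ dist w z < δ ∧ ∃ q ∈ L, q w = w ∧ q z = b} with hAdef
  have hAne : ∀ δ : ℝ, 0 < δ → (A δ).Nonempty := by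
    intro δ hδ
    have hz' : z ∈ closure {z' | z' ∈ minCenter Fol x ∧ IsAlmostPeriodicPt G z'} := hdense hzC
    rw [Metric.mem_closure_iff] at hz'
    obtain ⟨w, hwmem, hwd⟩ := hz' δ hδ
    obtain ⟨q, hqL, hqw⟩ := hAPfix w hwmem.2
    exact ⟨q z, w, hwmem.2, by rwa [dist_comm], q, hqL, hqw, rfl⟩
  have hAM : ∀ δ : ℝ, A δ ⊆ M := by
    rintro δ _ ⟨w, -, -, q, hqL, -, rfl⟩
    exact ⟨q, hqL, rfl⟩
  set Sd : ℕ → Set X := fun k => closure (A (1 / (k + 1))) with hSddef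
  have hSdM : ∀ k, Sd k ⊆ M := fun k => (hMy z).2.1.closure_subset_iff.mpr (hAM _)
  have hnest : ∀ k, Sd (k + 1) ⊆ Sd k := by
    intro k
    refine closure_mono ?_
    rintro b ⟨w, h1, h2, h3⟩
    refine ⟨w, h1, h2.trans_le ?_, h3⟩
    rw [div_le_div_iff₀ (by positivity) (by positivity)]
    push_cast
    linarith
  obtain ⟨x₂, hx₂⟩ := IsCompact.nonempty_iInter_of_sequence_nonempty_isCompact_isClosed Sd
    hnest (fun k => (hAne _ (by positivity)).mono subset_closure)
    isClosed_closure.isCompact (fun k => isClosed_closure)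
  have hx₂M : x₂ ∈ M := hSdM 0 (Set.mem_iInter.mp hx₂ 0)
  have hx₂C : x₂ ∈ C := hMC hx₂M
  have hne : z ≠ x₂ := fun h => hzM (h ▸ hx₂M)
  refine ⟨z, hzC, x₂, hx₂C, hne, ?_⟩
  intro xhat hxhat U hUopen hxhatU U₁ hU₁ hzU₁ U₂ hU₂ hx₂U₂
  -- find an orbit point of z inside U
  obtain ⟨u, huU, g₀, hg₀⟩ : ∃ u ∈ U, ∃ g₀ : G, g₀ • z = u := by
    have h1 := horbz xhat hxhat
    rw [_root_.mem_closure_iff] at h1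
    obtain ⟨u, huU, g₀, hg₀⟩ := h1 U hUopen hxhatU
    exact ⟨u, huU, g₀, hg₀⟩
  set O : Set X := (fun y : X => g₀ • y) ⁻¹' U with hOdef
  have hOopen : IsOpen O := hUopen.preimage (hcont g₀)
  have hzO : z ∈ O := by
    simp only [hOdef, Set.mem_preimage]
    rw [hg₀]
    exact huU
  obtain ⟨δ, hδpos, hδball⟩ := Metric.isOpen_iff.mp (hOopen.inter hU₁) z ⟨hzO, hzU₁⟩
  obtain ⟨k, hk⟩ := exists_nat_one_div_lt hδpos
  have hx₂Sd : x₂ ∈ Sd k := Set.mem_iInter.mp hx₂ k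
  rw [_root_.mem_closure_iff] at hx₂Sd
  obtain ⟨b, hbU₂, hbA⟩ := hx₂Sd U₂ hU₂ hx₂U₂
  obtain ⟨w, hwAP, hwdist, q, hqL, hqww, hqzb⟩ := hbA
  have hwball : w ∈ Metric.ball z δ := by
    rw [Metric.mem_ball]
    calc dist w z < 1 / (k + 1) := hwdist
      _ < δ := hk
  have hwO : w ∈ O := (hδball hwball).1
  have hwU₁ : w ∈ U₁ := (hδball hwball).2
  -- the pair (w, b) is approximated by orbit pairs of (w, z)
  have hp := hPair w q (hLE hqL)
  rw [hqww, hqzb, _root_.mem_closure_iff] at hp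
  obtain ⟨_, hmem, g, rfl⟩ := hp (U₁ ×ˢ U₂) (hU₁.prod hU₂) ⟨hwU₁, hbU₂⟩
  obtain ⟨hg1, hg2⟩ := hmem
  refine ⟨g₀ • w, hwO, g₀ • z, by rwa [hg₀], g * g₀⁻¹, ?_, ?_⟩
  · rwa [smul_smul, inv_mul_cancel_right]
  · rwa [smul_smul, inv_mul_cancel_right]
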